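/- Let β : R ⇒ Id be the counit of an idempotent comonad R on a category B, with comultiplication σ. Then for every object X, the triple (RX, β_X : RX → X, id_{RX}) is a strong homotopy kernel of id_X with respect to the structure of nullhomotopies Θ_β(g : X → Y) = { ψ : X → RY | β_Y ∘ ψ = g }. -/
import Mathlib


open CategoryTheory

/-- Let `β = R.ε` be the counit of an idempotent comonad `R`. For every object `X`, the triple
`(R X, β_X, 𝟙 (R X))` is a strong homotopy kernel of `𝟙 X` with respect to the structure of
nullhomotopies `Θ_β(g : X ⟶ Y) = {ψ : X ⟶ R Y | ψ ≫ β_Y = g}` (with action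
`h ∘ ψ ∘ f = f ≫ ψ ≫ R h`), stated here concretely. -/
theorem stmt14 {B : Type*} [Category B] (R : Comonad B)
    (idem : ∀ X : B, IsIso (R.δ.app X)) (X : B) :
    -- `𝟙 (R X)` is a nullhomotopy on `𝟙 X ∘ β_X`
    (𝟙 (R.obj X) ≫ R.ε.app X = R.ε.app X ≫ 𝟙 X) ∧
    -- homotopy kernel universal property
    (∀ {W : B} (f : W ⟶ X) (φ : W ⟶ R.obj X), φ ≫ R.ε.app X = f ≫ 𝟙 X →
      ∃! f' : W ⟶ R.obj X, f' ≫ R.ε.app X = f ∧ f' ≫ 𝟙 (R.obj X) = φ) ∧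
    -- strongness
    (∀ {W : B} (f : W ⟶ R.obj X) (φ : W ⟶ R.obj X),
      φ ≫ R.ε.app X = f ≫ R.ε.app X →
      φ ≫ R.map (𝟙 X) = f ≫ 𝟙 (R.obj X) →
      ∃! φ' : W ⟶ R.obj (R.obj X),
        φ' ≫ R.ε.app (R.obj X) = f ∧ φ' ≫ R.map (R.ε.app X) = φ) := by
  refine ⟨by simp, ?_, ?_⟩
  · intro W f φ h
    refine ⟨φ, ⟨by simpa using h, by simp⟩, ?_⟩
    rintro f' ⟨-, h2⟩
    simpa using h2
  · intro W f φ h1 h2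
    have hφf : φ = f := by simpa using h2
    have hiso : IsIso (R.ε.app (R.obj X)) := by
      have := idem X
      exact ⟨R.δ.app X, by
        rw [← cancel_epi (R.δ.app X)]
        simp, by simp⟩
    refine ⟨f ≫ R.δ.app X, ⟨by simp, by simp [hφf]⟩, ?_⟩
    rintro ψ ⟨hψ1, -⟩
    rw [← cancel_mono (R.ε.app (R.obj X))]
    simp [hψ1]
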